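/- For all sufficiently large natural numbers m, the sum over primes p dividing m of (log p)/(p^{1/4} - 1) is at most (1/2) log m. -/

import Mathlib

open Finset

theorem sum_log_div_pow_quarter_le :
    ∃ N : ℕ, ∀ m : ℕ, N ≤ m →
      ∑ p ∈ m.primeFactors, Real.log p / ((p : ℝ) ^ ((1 : ℝ) / 4) - 1)
        ≤ (1 / 2) * Real.log m := by
  refine ⟨⌈Real.exp 10000000⌉₊ + 1, fun m hm => ?_⟩
  have hm0 : 0 < m := lt_of_lt_of_le (Nat.succ_pos _) hm
  have hmR : Real.exp 10000000 ≤ (m : ℝ) := by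
    have h1 : (⌈Real.exp 10000000⌉₊ : ℝ) ≤ m := by
      exact_mod_cast le_trans (Nat.le_succ _) hm
    exact le_trans (Nat.le_ceil _) h1
  have hlogm : (10000000 : ℝ) ≤ Real.log m := by
    have h := Real.log_le_log (Real.exp_pos _) hmR
    rwa [Real.log_exp] at h
  -- sum of logs of prime factors is at most log m
  have hsumlog : ∑ p ∈ m.primeFactors, Real.log p ≤ Real.log m := by
    rw [← Real.log_prod (fun p hp => by
      exact_mod_cast (Nat.prime_of_mem_primeFactors hp).ne_zero)]
    have hdvd : ∏ p ∈ m.primeFactors, p ∣ m := Nat.prod_primeFactors_dvd m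
    have h2 : ((∏ p ∈ m.primeFactors, p : ℕ) : ℝ) ≤ m := by
      exact_mod_cast Nat.le_of_dvd hm0 hdvd
    push_cast at h2
    apply Real.log_le_log _ h2
    apply Finset.prod_pos
    intro p hp
    exact_mod_cast (Nat.prime_of_mem_primeFactors hp).pos
  have hlognn : ∀ p ∈ m.primeFactors, (0:ℝ) ≤ Real.log p := fun p hp =>
    Real.log_nonneg (by exact_mod_cast (Nat.prime_of_mem_primeFactors hp).one_lt.le)
  set F := m.primeFactors with hF
  have hsplit := Finset.sum_filter_add_sum_filter_not F (fun p => p < 625)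
    (fun p => Real.log p / ((p : ℝ) ^ ((1 : ℝ) / 4) - 1))
  -- bound on small part
  have hA : ∑ p ∈ F.filter (fun p => p < 625),
      Real.log p / ((p : ℝ) ^ ((1 : ℝ) / 4) - 1) ≤ 2340000 := by
    have hcard : (F.filter (fun p => p < 625)).card ≤ 625 := by
      have : F.filter (fun p => p < 625) ⊆ Finset.range 625 := by
        intro p hp
        simp only [Finset.mem_filter] at hp
        exact Finset.mem_range.mpr hp.2
      simpa using Finset.card_le_card this
    have hterm : ∀ p ∈ F.filter (fun p => p < 625),
        Real.log p / ((p : ℝ) ^ ((1 : ℝ) / 4) - 1) ≤ 3744 := by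
      intro p hp
      simp only [Finset.mem_filter] at hp
      have hprime := Nat.prime_of_mem_primeFactors hp.1
      have hp2 : (2:ℝ) ≤ p := by exact_mod_cast hprime.two_le
      have h76 : (7:ℝ)/6 ≤ (2:ℝ)^((1:ℝ)/4) := by
        have h1 : ((7:ℝ)/6) = (((7:ℝ)/6)^(4:ℕ))^((1:ℝ)/4) := by
          rw [← Real.rpow_natCast ((7:ℝ)/6) 4, ← Real.rpow_mul (by norm_num)]
          norm_num
        rw [h1]
        exact Real.rpow_le_rpow (by positivity) (by norm_num) (by norm_num)
      have hmono : (2:ℝ)^((1:ℝ)/4) ≤ (p:ℝ)^((1:ℝ)/4) :=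
        Real.rpow_le_rpow (by norm_num) hp2 (by norm_num)
      have hden : (1:ℝ)/6 ≤ (p:ℝ)^((1:ℝ)/4) - 1 := by linarith
      have hlogle : Real.log p ≤ 624 := by
        have h1 : Real.log p ≤ (p:ℝ) - 1 :=
          Real.log_le_sub_one_of_pos (by positivity)
        have h2 : (p:ℝ) ≤ 625 := by exact_mod_cast Nat.le_of_lt_succ (Nat.lt_succ_of_lt hp.2)
        linarith
      have hlp : (0:ℝ) ≤ Real.log p := hlognn p hp.1
      rw [div_le_iff₀ (by linarith)]
      nlinarith
    calc ∑ p ∈ F.filter (fun p => p < 625),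
          Real.log p / ((p : ℝ) ^ ((1 : ℝ) / 4) - 1)
        ≤ (F.filter (fun p => p < 625)).card • (3744:ℝ) :=
          Finset.sum_le_card_nsmul _ _ _ hterm
      _ ≤ 625 • (3744:ℝ) := by
          exact nsmul_le_nsmul_left (by norm_num) hcard
      _ = 2340000 := by norm_num
  -- bound on large part
  have hB : ∑ p ∈ F.filter (fun p => ¬ p < 625),
      Real.log p / ((p : ℝ) ^ ((1 : ℝ) / 4) - 1) ≤ (1/4) * Real.log m := by
    have hterm : ∀ p ∈ F.filter (fun p => ¬ p < 625),
        Real.log p / ((p : ℝ) ^ ((1 : ℝ) / 4) - 1) ≤ (1/4) * Real.log p := by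
      intro p hp
      simp only [Finset.mem_filter, not_lt] at hp
      have hp625 : (625:ℝ) ≤ p := by exact_mod_cast hp.2
      have h5 : (5:ℝ) ≤ (p:ℝ)^((1:ℝ)/4) := by
        have h1 : (5:ℝ) = ((5:ℝ)^(4:ℕ))^((1:ℝ)/4) := by
          rw [← Real.rpow_natCast (5:ℝ) 4, ← Real.rpow_mul (by norm_num)]
          norm_num
        rw [h1]
        refine Real.rpow_le_rpow (by norm_num) ?_ (by norm_num)
        norm_num
        linarith
      have hlp : (0:ℝ) ≤ Real.log p := hlognn p hp.1
      rw [div_le_iff₀ (by linarith)]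
      nlinarith
    calc ∑ p ∈ F.filter (fun p => ¬ p < 625),
          Real.log p / ((p : ℝ) ^ ((1 : ℝ) / 4) - 1)
        ≤ ∑ p ∈ F.filter (fun p => ¬ p < 625), (1/4) * Real.log p :=
          Finset.sum_le_sum hterm
      _ = (1/4) * ∑ p ∈ F.filter (fun p => ¬ p < 625), Real.log p := by
          rw [Finset.mul_sum]
      _ ≤ (1/4) * ∑ p ∈ F, Real.log p := by
          apply mul_le_mul_of_nonneg_left _ (by norm_num)
          exact Finset.sum_le_sum_of_subset_of_nonneg (Finset.filter_subset _ _)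
            (fun p hp _ => hlognn p hp)
      _ ≤ (1/4) * Real.log m := by
          apply mul_le_mul_of_nonneg_left hsumlog (by norm_num)
  rw [← hsplit]
  linarith
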